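/- Define the total time derivative d_T = ∂/∂t + Σ_{i≥0} q_{i+1}^A ∂/∂q_i^A acting on functions of (t, q_0,...,q_{2k-1}). On the constraint submanifold cut out by the functions ξ_r^A = p_A^{k-r} − Σ_{i=0}^{r-1} (−1)^i d_T^i(∂L̂/∂q_{k-r+1+i}^A) for 1 ≤ r ≤ k-1, the tangency condition X(ξ_r^A) = 0 for the dynamical vector field X (satisfying the equations of the previous statement) produces exactly the next constraint ξ_{r+1}^A = p_A^{k-r-1} − Σ_{i=0}^{r} (−1)^i d_T^i(∂L̂/∂q_{k-r+i}^A) = 0. -/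

import Mathlib

/-! **The constraint algorithm generates the Legendre–Ostrogradsky momenta.**

On `W_r ≅ ℝ × (ℝ^n)^{2k} × (ℝ^n)^k`, with the total time derivative
`d_T = ∂/∂t + Σ_i q_{i+1}^A ∂/∂q_i^A` acting on functions of
`(t, q_0, …, q_{2k-1})`, the constraints are
`ξ_r^A = p_A^{k-r} − Σ_{i=0}^{r-1} (−1)^i d_T^i(∂L̂/∂q_{k-r+1+i}^A)`,
`1 ≤ r ≤ k-1`.  For the dynamical vector field
`X = ∂/∂t + Σ_{l} q_{l+1}^A ∂/∂q_l^A + F_{2k-1}^A ∂/∂q_{2k-1}^A + G_A^i ∂/∂p_A^i`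
(with `G_A^0 = ∂L̂/∂q_0^A`, `G_A^i = ∂L̂/∂q_i^A − p_A^{i-1}`), the tangency
condition `X(ξ_r^A) = 0` produces exactly the next constraint:
`X(ξ_r^A) = −ξ_{r+1}^A`. -/

variable (n k : ℕ)

abbrev Jet (n k : ℕ) := ℝ × (Fin (2 * k) → Fin n → ℝ)

abbrev Wr (n k : ℕ) := ℝ × (Fin (2 * k) → Fin n → ℝ) × (Fin k → Fin n → ℝ)

/-- `∂L̂/∂q_j^A`. -/
noncomputable def pd (Lhat : Jet n k → ℝ) (j : Fin (2 * k)) (A : Fin n)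
    (x : Jet n k) : ℝ :=
  fderiv ℝ Lhat x ((0 : ℝ), Pi.single j (Pi.single A (1 : ℝ)))

/-- The total time derivative `d_T = ∂/∂t + Σ_{i=0}^{2k-2} q_{i+1}^A ∂/∂q_i^A`
on functions of `(t, q_0, …, q_{2k-1})`. -/
noncomputable def dT (f : Jet n k → ℝ) (x : Jet n k) : ℝ :=
  fderiv ℝ f x ((1 : ℝ), 0) +
    ∑ i : Fin (2 * k), ∑ A : Fin n,
      (if h : i.1 + 1 < 2 * k then x.2 ⟨i.1 + 1, h⟩ A else 0) *
        fderiv ℝ f x ((0 : ℝ), Pi.single i (Pi.single A (1 : ℝ)))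

/-- The constraint `ξ_r^A`, `1 ≤ r ≤ k`. -/
noncomputable def xiC (hk : 1 ≤ k) (Lhat : Jet n k → ℝ)
    (r : ℕ) (hr1 : 1 ≤ r) (hr2 : r ≤ k) (A : Fin n) (w : Wr n k) : ℝ :=
  w.2.2 ⟨k - r, by omega⟩ A -
    ∑ i : Fin r, (-1 : ℝ) ^ (i : ℕ) *
      (dT n k)^[i] (pd n k Lhat ⟨k - r + 1 + i.1, by have := i.isLt; omega⟩ A)
        (w.1, w.2.1)

/-- The dynamical vector field `X` of the unified formalism (its value at `w`),
with free top components `F_{2k-1} = Ftop`. -/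
noncomputable def Xvec (hk : 1 ≤ k) (Lhat : Jet n k → ℝ)
    (Ftop : Wr n k → Fin n → ℝ) (w : Wr n k) : Wr n k :=
  ((1 : ℝ),
   fun l A => if h : l.1 + 1 < 2 * k then w.2.1 ⟨l.1 + 1, h⟩ A else Ftop w A,
   fun i A =>
     if h : i.1 = 0 then pd n k Lhat ⟨0, by omega⟩ A (w.1, w.2.1)
     else pd n k Lhat ⟨i.1, by have := i.isLt; omega⟩ A (w.1, w.2.1) -
       w.2.2 ⟨i.1 - 1, by have := i.isLt; omega⟩ A)

noncomputable def truncL (m : ℕ) : Jet n k →L[ℝ] Jet n k :=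
  (ContinuousLinearMap.id ℝ ℝ).prodMap
    (ContinuousLinearMap.pi fun i : Fin (2*k) =>
      if i.1 ≤ m then ContinuousLinearMap.proj i else 0)

lemma truncL_apply (m : ℕ) (x : Jet n k) :
    truncL n k m x = (x.1, fun i => if i.1 ≤ m then x.2 i else 0) := by
  refine Prod.ext rfl ?_
  funext i
  by_cases h : i.1 ≤ m <;>
    simp [truncL, h]

lemma truncL_truncL {m m' : ℕ} (h : m ≤ m') (x : Jet n k) :
    truncL n k m (truncL n k m' x) = truncL n k m x := by
  simp only [truncL_apply]
  refine Prod.ext rfl ?_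
  funext i
  by_cases hi : i.1 ≤ m
  · simp [hi, hi.trans h]
  · simp [hi]

def Dep (m : ℕ) (f : Jet n k → ℝ) : Prop := ∀ x, f (truncL n k m x) = f x

lemma Dep.mono {m m' : ℕ} {f : Jet n k → ℝ} (hd : Dep n k m f) (h : m ≤ m') :
    Dep n k m' f := fun x => by
  rw [← hd (truncL n k m' x), truncL_truncL n k h, hd x]

lemma Dep.fderiv_eq {m : ℕ} {f : Jet n k → ℝ} (hf : ContDiff ℝ (⊤:ℕ∞) f)
    (hd : Dep n k m f) (x v : Jet n k) :
    fderiv ℝ f x v = fderiv ℝ f (truncL n k m x) (truncL n k m v) := by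
  have hcomp : f ∘ (truncL n k m) = f := funext fun y => hd y
  have h1 : HasFDerivAt (f ∘ (truncL n k m))
      ((fderiv ℝ f (truncL n k m x)).comp (truncL n k m)) x :=
    ((hf.differentiable (by simp) _).hasFDerivAt).comp x
      ((truncL n k m).hasFDerivAt)
  rw [hcomp] at h1
  rw [h1.fderiv]; rfl

lemma fderiv_congr_of_dep {m m' : ℕ} (hmm : m ≤ m') {f : Jet n k → ℝ}
    (hf : ContDiff ℝ (⊤:ℕ∞) f) (hd : Dep n k m f) (x v : Jet n k) :
    fderiv ℝ f (truncL n k m' x) v = fderiv ℝ f x v := by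
  rw [Dep.fderiv_eq n k hf hd (truncL n k m' x) v, truncL_truncL n k hmm,
    ← Dep.fderiv_eq n k hf hd x v]

lemma Dep.fderiv_zero {m : ℕ} {f : Jet n k → ℝ} (hf : ContDiff ℝ (⊤:ℕ∞) f)
    (hd : Dep n k m f) (x v : Jet n k) (hv : truncL n k m v = 0) :
    fderiv ℝ f x v = 0 := by
  rw [Dep.fderiv_eq n k hf hd x v, hv, map_zero]

noncomputable def eV (j : Fin (2*k)) (A : Fin n) : Jet n k :=
  ((0:ℝ), Pi.single j (Pi.single A (1:ℝ)))

lemma truncL_eV (m : ℕ) (j : Fin (2*k)) (A : Fin n) :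
    truncL n k m (eV n k j A) = if j.1 ≤ m then eV n k j A else 0 := by
  simp only [truncL_apply, eV]
  split_ifs with h
  · refine Prod.ext rfl ?_
    funext i
    by_cases hij : i = j
    · subst hij; simp [h]
    · simp [Pi.single_eq_of_ne hij]
  · refine Prod.ext rfl ?_
    funext i
    by_cases hij : i = j
    · subst hij; simp [h]
    · simp [Pi.single_eq_of_ne hij]

lemma contDiff_coord (i : Fin (2*k)) (A : Fin n) :
    ContDiff ℝ (⊤:ℕ∞) (fun x : Jet n k => x.2 i A) :=
  contDiff_pi.mp (contDiff_pi.mp contDiff_snd i) A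

lemma dT_contDiff {f : Jet n k → ℝ} (hf : ContDiff ℝ (⊤:ℕ∞) f) :
    ContDiff ℝ (⊤:ℕ∞) (dT n k f) := by
  unfold dT
  refine ContDiff.add ?_ ?_
  · exact (hf.fderiv_right (by exact_mod_cast le_top)).clm_apply contDiff_const
  · refine ContDiff.sum fun i _ => ContDiff.sum fun A _ => ContDiff.mul ?_ ?_
    · by_cases h : i.1 + 1 < 2*k
      · simp only [dif_pos h]; exact contDiff_coord n k _ A
      · simp only [dif_neg h]; exact contDiff_const
    · exact (hf.fderiv_right (by exact_mod_cast le_top)).clm_apply contDiff_const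

lemma dT_dep {m : ℕ} {f : Jet n k → ℝ} (hf : ContDiff ℝ (⊤:ℕ∞) f)
    (hd : Dep n k m f) : Dep n k (m+1) (dT n k f) := by
  intro x
  unfold dT
  have hA : ∀ v, fderiv ℝ f (truncL n k (m+1) x) v = fderiv ℝ f x v :=
    fun v => fderiv_congr_of_dep n k (Nat.le_succ m) hf hd x v
  simp only [hA]
  congr 1
  refine Finset.sum_congr rfl fun i _ => Finset.sum_congr rfl fun A _ => ?_
  by_cases hi : i.1 ≤ m
  · congr 1
    by_cases h : i.1 + 1 < 2*k
    · simp only [dif_pos h, truncL_apply]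
      rw [if_pos (by omega : i.1 + 1 ≤ m + 1)]
    · simp [h]
  · have h0 : fderiv ℝ f x ((0:ℝ), Pi.single i (Pi.single A (1:ℝ))) = 0 := by
      refine Dep.fderiv_zero n k hf hd x _ ?_
      rw [show ((0:ℝ), Pi.single i (Pi.single A (1:ℝ))) = eV n k i A from rfl,
        truncL_eV, if_neg hi]
    rw [h0, mul_zero, mul_zero]

lemma iter_contDiff {f : Jet n k → ℝ} (hf : ContDiff ℝ (⊤:ℕ∞) f) :
    ∀ i, ContDiff ℝ (⊤:ℕ∞) ((dT n k)^[i] f)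
  | 0 => hf
  | (i+1) => by
      rw [Function.iterate_succ_apply']
      exact dT_contDiff n k (iter_contDiff hf i)

lemma iter_dep {m : ℕ} {f : Jet n k → ℝ} (hf : ContDiff ℝ (⊤:ℕ∞) f)
    (hd : Dep n k m f) : ∀ i, Dep n k (m+i) ((dT n k)^[i] f)
  | 0 => hd
  | (i+1) => by
      rw [Function.iterate_succ_apply']
      exact dT_dep n k (iter_contDiff n k hf i) (iter_dep hf hd i)

lemma jet_expand (a : ℝ) (v : Fin (2*k) → Fin n → ℝ) :
    ((a, v) : Jet n k) = a • ((1:ℝ), (0 : Fin (2*k) → Fin n → ℝ))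
      + ∑ i : Fin (2*k), ∑ B : Fin n, v i B • eV n k i B := by
  refine Prod.ext ?_ ?_
  · simp [eV, Prod.fst_sum]
  · funext l B'
    simp [eV, Prod.snd_sum, Finset.sum_apply, Pi.single_apply, mul_ite,
      Finset.sum_ite_eq, Finset.sum_ite_eq', ite_apply]

lemma fderiv_combo {ι : Type*} [Fintype ι] (c : ι → ℝ) (f : ι → Jet n k → ℝ)
    (hf : ∀ j, ContDiff ℝ (⊤:ℕ∞) (f j)) (x v : Jet n k) :
    fderiv ℝ (fun y => ∑ j, c j * f j y) x v = ∑ j, c j * fderiv ℝ (f j) x v := by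
  rw [fderiv_fun_sum fun j _ =>
    ((hf j).differentiable (by simp) x).const_mul (c j)]
  rw [ContinuousLinearMap.sum_apply]
  refine Finset.sum_congr rfl fun j _ => ?_
  rw [fderiv_const_mul ((hf j).differentiable (by simp) x) (c j)]
  simp

lemma dT_combo {ι : Type*} [Fintype ι] (c : ι → ℝ) (f : ι → Jet n k → ℝ)
    (hf : ∀ j, ContDiff ℝ (⊤:ℕ∞) (f j)) (x : Jet n k) :
    dT n k (fun y => ∑ j, c j * f j y) x = ∑ j, c j * dT n k (f j) x := by
  unfold dT
  simp only [fderiv_combo n k c f hf]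
  simp only [Finset.mul_sum, mul_add, Finset.sum_add_distrib]
  congr 1
  calc (∑ i : Fin (2*k), ∑ B : Fin n, ∑ j : ι,
        (if h : i.1 + 1 < 2 * k then x.2 ⟨i.1 + 1, h⟩ B else 0) *
          (c j * fderiv ℝ (f j) x ((0:ℝ), Pi.single i (Pi.single B 1))))
      = ∑ i : Fin (2*k), ∑ j : ι, ∑ B : Fin n,
        (if h : i.1 + 1 < 2 * k then x.2 ⟨i.1 + 1, h⟩ B else 0) *
          (c j * fderiv ℝ (f j) x ((0:ℝ), Pi.single i (Pi.single B 1))) :=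
        Finset.sum_congr rfl fun i _ => Finset.sum_comm
    _ = ∑ j : ι, ∑ i : Fin (2*k), ∑ B : Fin n,
        (if h : i.1 + 1 < 2 * k then x.2 ⟨i.1 + 1, h⟩ B else 0) *
          (c j * fderiv ℝ (f j) x ((0:ℝ), Pi.single i (Pi.single B 1))) :=
        Finset.sum_comm
    _ = _ := Finset.sum_congr rfl fun j _ => Finset.sum_congr rfl fun i _ =>
          Finset.sum_congr rfl fun B _ => by ring

lemma fderiv_dir_eq_dT (hk : 1 ≤ k) {f : Jet n k → ℝ} (hf : ContDiff ℝ (⊤:ℕ∞) f)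
    (hdp : Dep n k (2*k-2) f) (x : Jet n k) (V : Fin (2*k) → Fin n → ℝ)
    (hV : ∀ (i : Fin (2*k)) (h : i.1 + 1 < 2*k) (B : Fin n), V i B = x.2 ⟨i.1+1, h⟩ B) :
    fderiv ℝ f x ((1:ℝ), V) = dT n k f x := by
  rw [jet_expand n k 1 V, map_add, one_smul, map_sum]
  simp only [map_sum, map_smul, smul_eq_mul]
  unfold dT
  congr 1
  refine Finset.sum_congr rfl fun i _ => Finset.sum_congr rfl fun B _ => ?_
  by_cases h : i.1 + 1 < 2*k
  · rw [dif_pos h, hV i h B]; rfl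
  · rw [dif_neg h]
    have h0 : fderiv ℝ f x (eV n k i B) = 0 := by
      refine Dep.fderiv_zero n k hf hdp x _ ?_
      rw [truncL_eV, if_neg (by have := i.isLt; omega)]
    rw [show ((0:ℝ), Pi.single i (Pi.single B (1:ℝ))) = eV n k i B from rfl, h0,
      mul_zero, mul_zero]

lemma pd_contDiff (Lhat : Jet n k → ℝ) (hL : ContDiff ℝ (⊤:ℕ∞) Lhat)
    (j : Fin (2*k)) (A : Fin n) : ContDiff ℝ (⊤:ℕ∞) (pd n k Lhat j A) := by
  unfold pd
  exact (hL.fderiv_right (by exact_mod_cast le_top)).clm_apply contDiff_const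

lemma pd_dep (Lhat : Jet n k → ℝ) (hL : ContDiff ℝ (⊤:ℕ∞) Lhat)
    (hdL : Dep n k k Lhat) (j : Fin (2*k)) (hj : j.1 ≤ k) (A : Fin n) :
    Dep n k k (pd n k Lhat j A) := fun x => by
  unfold pd
  exact fderiv_congr_of_dep n k le_rfl hL hdL x _

noncomputable def Sgen (Lhat : Jet n k → ℝ) (b r : ℕ) (hbr : b + r ≤ 2*k)
    (A : Fin n) (x : Jet n k) : ℝ :=
  ∑ i : Fin r, (-1:ℝ)^(i:ℕ) *
    (dT n k)^[i] (pd n k Lhat ⟨b + i.1, by have := i.isLt; omega⟩ A) x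

lemma Sgen_contDiff (Lhat : Jet n k → ℝ) (hL : ContDiff ℝ (⊤:ℕ∞) Lhat)
    (b r : ℕ) (hbr : b + r ≤ 2*k) (A : Fin n) :
    ContDiff ℝ (⊤:ℕ∞) (Sgen n k Lhat b r hbr A) := by
  unfold Sgen
  exact ContDiff.sum fun i _ =>
    contDiff_const.mul (iter_contDiff n k (pd_contDiff n k Lhat hL _ A) i.1)

lemma Sgen_dep (Lhat : Jet n k → ℝ) (hL : ContDiff ℝ (⊤:ℕ∞) Lhat)
    (hdL : Dep n k k Lhat) (b r m : ℕ) (hbr : b + r ≤ 2*k) (hbk : b + r ≤ k + 1)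
    (hm : ∀ i < r, k + i ≤ m) (A : Fin n) :
    Dep n k m (Sgen n k Lhat b r hbr A) := fun x => by
  unfold Sgen
  refine Finset.sum_congr rfl fun i _ => ?_
  congr 1
  have h1 := iter_dep n k (pd_contDiff n k Lhat hL ⟨b + i.1, by have := i.isLt; omega⟩ A)
    (pd_dep n k Lhat hL hdL _ (show b + i.1 ≤ k by have := i.isLt; omega) A) i.1
  exact Dep.mono n k h1 (hm i.1 i.isLt) x

lemma pd_index_congr (Lhat : Jet n k → ℝ) (A : Fin n) {a b : ℕ}
    (ha : a < 2*k) (hb : b < 2*k) (h : a = b) :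
    pd n k Lhat ⟨a, ha⟩ A = pd n k Lhat ⟨b, hb⟩ A := by subst h; rfl

lemma Sgen_congr (Lhat : Jet n k → ℝ) (A : Fin n) {b b' r : ℕ}
    (hbr : b + r ≤ 2*k) (hbr' : b' + r ≤ 2*k) (h : b = b') :
    Sgen n k Lhat b r hbr A = Sgen n k Lhat b' r hbr' A := by subst h; rfl

lemma Sgen_succ (Lhat : Jet n k → ℝ) (hL : ContDiff ℝ (⊤:ℕ∞) Lhat)
    (b r : ℕ) (hb : 1 ≤ b) (hbr : b + r ≤ 2*k) (A : Fin n) (x : Jet n k) :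
    Sgen n k Lhat (b-1) (r+1) (by omega) A x
      = pd n k Lhat ⟨b-1, by omega⟩ A x
        - dT n k (Sgen n k Lhat b r (by omega) A) x := by
  have hcombo := dT_combo n k (fun i : Fin r => (-1:ℝ)^(i:ℕ))
    (fun i : Fin r => (dT n k)^[i.1]
      (pd n k Lhat ⟨b + i.1, by have := i.isLt; omega⟩ A))
    (fun i => iter_contDiff n k (pd_contDiff n k Lhat hL _ A) i.1) x
  unfold Sgen
  rw [hcombo, Fin.sum_univ_succ]
  simp only [Fin.val_zero, Fin.val_succ, pow_zero, one_mul, add_zero,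
    Function.iterate_zero, id_eq]
  have hsum : (∑ i : Fin r, (-1:ℝ)^(i.1+1) *
      (dT n k)^[i.1+1] (pd n k Lhat ⟨b-1+(i.1+1), by have := i.isLt; omega⟩ A) x)
      = ∑ i : Fin r, -((-1:ℝ)^(i.1) *
        dT n k ((dT n k)^[i.1] (pd n k Lhat ⟨b+i.1, by have := i.isLt; omega⟩ A)) x) := by
    refine Finset.sum_congr rfl fun i _ => ?_
    rw [pd_index_congr n k Lhat A (by omega) (by have := i.isLt; omega)
      (show b - 1 + (i.1 + 1) = b + i.1 by omega),
      Function.iterate_succ_apply', pow_succ]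
    ring
  rw [hsum, Finset.sum_neg_distrib]
  ring

noncomputable def piL : Wr n k →L[ℝ] Jet n k :=
  (ContinuousLinearMap.fst ℝ ℝ _).prod
    ((ContinuousLinearMap.fst ℝ _ _).comp (ContinuousLinearMap.snd ℝ ℝ _))

lemma piL_apply (w : Wr n k) : piL n k w = (w.1, w.2.1) := rfl

noncomputable def evP (j : Fin k) (A : Fin n) : Wr n k →L[ℝ] ℝ :=
  ((ContinuousLinearMap.proj A : (Fin n → ℝ) →L[ℝ] ℝ).comp
    (((ContinuousLinearMap.proj j : (Fin k → Fin n → ℝ) →L[ℝ] (Fin n → ℝ))).comp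
      (((ContinuousLinearMap.snd ℝ (Fin (2*k) → Fin n → ℝ) (Fin k → Fin n → ℝ))).comp
        (ContinuousLinearMap.snd ℝ ℝ ((Fin (2*k) → Fin n → ℝ) × (Fin k → Fin n → ℝ))))))

lemma evP_apply (j : Fin k) (A : Fin n) (w : Wr n k) : evP n k j A w = w.2.2 j A := rfl

lemma Lhat_dep (Lhat : Jet n k → ℝ)
    (hdep : ∀ (t : ℝ) (q q' : Fin (2 * k) → Fin n → ℝ),
      (∀ i : Fin (2 * k), i.1 ≤ k → q i = q' i) → Lhat (t, q) = Lhat (t, q')) :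
    Dep n k k Lhat := fun x => by
  rw [truncL_apply]
  exact hdep x.1 _ x.2 (fun i hi => if_pos hi)

/-- **Tangency produces the next constraint:** `X(ξ_r^A) = −ξ_{r+1}^A`. -/
theorem tangency_generates_next_constraint (hk : 1 ≤ k)
    (Lhat : Jet n k → ℝ) (hL : ContDiff ℝ (⊤ : ℕ∞) Lhat)
    (hdep : ∀ (t : ℝ) (q q' : Fin (2 * k) → Fin n → ℝ),
      (∀ i : Fin (2 * k), i.1 ≤ k → q i = q' i) → Lhat (t, q) = Lhat (t, q'))
    (Ftop : Wr n k → Fin n → ℝ)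
    (r : ℕ) (hr1 : 1 ≤ r) (hr2 : r ≤ k - 1) (A : Fin n) (w : Wr n k) :
    fderiv ℝ (xiC n k hk Lhat r hr1 (by omega) A) w
        (Xvec n k hk Lhat Ftop w) =
      -(xiC n k hk Lhat (r + 1) (by omega) (by omega) A w) := by
  have hdL : Dep n k k Lhat := Lhat_dep n k Lhat hdep
  set x : Jet n k := (w.1, w.2.1) with hx
  have hbr : (k - r + 1) + r ≤ 2*k := by omega
  set S : Jet n k → ℝ := Sgen n k Lhat (k - r + 1) r hbr A with hSdef
  have hSc : ContDiff ℝ (⊤:ℕ∞) S := Sgen_contDiff n k Lhat hL _ r hbr A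
  have hSd : Dep n k (2*k-2) S :=
    Sgen_dep n k Lhat hL hdL _ r (2*k-2) hbr (by omega) (fun i hi => by omega) A
  have hxiC : xiC n k hk Lhat r hr1 (by omega) A
      = fun w' => evP n k ⟨k - r, by omega⟩ A w' - S (piL n k w') := rfl
  have hF : HasFDerivAt (xiC n k hk Lhat r hr1 (by omega) A)
      ((evP n k ⟨k - r, by omega⟩ A) - (fderiv ℝ S x).comp (piL n k)) w := by
    rw [hxiC]
    exact ((evP n k ⟨k - r, by omega⟩ A).hasFDerivAt).sub
      (by have := ((hSc.differentiable (by simp) x).hasFDerivAt).comp w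
            ((piL n k).hasFDerivAt); exact this)
  rw [hF.fderiv]
  simp only [ContinuousLinearMap.sub_apply, ContinuousLinearMap.coe_comp',
    Function.comp_apply]
  have h1 : evP n k ⟨k - r, by omega⟩ A (Xvec n k hk Lhat Ftop w)
      = pd n k Lhat ⟨k - r, by omega⟩ A x - w.2.2 ⟨k - r - 1, by omega⟩ A := by
    rw [evP_apply]
    show (if h : (k - r) = 0 then _ else _) = _
    rw [dif_neg (by omega : ¬ (k - r) = 0)]
  have h3 : fderiv ℝ S x
      ((1:ℝ), fun l B => if h : l.1 + 1 < 2 * k then w.2.1 ⟨l.1 + 1, h⟩ B else Ftop w B)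
      = dT n k S x := by
    refine fderiv_dir_eq_dT n k hk hSc hSd x _ fun i h B => ?_
    rw [dif_pos h]
  have h4 : piL n k (Xvec n k hk Lhat Ftop w)
      = ((1:ℝ), fun l B => if h : l.1 + 1 < 2 * k then w.2.1 ⟨l.1 + 1, h⟩ B else Ftop w B) := rfl
  rw [h1, h4, h3]
  have h5 : xiC n k hk Lhat (r+1) (by omega) (by omega) A w
      = w.2.2 ⟨k - (r+1), by omega⟩ A
        - Sgen n k Lhat (k - (r+1) + 1) (r+1) (by omega) A x := rfl
  rw [h5, Sgen_congr n k Lhat A (by omega) (by omega)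
    (show k - (r+1) + 1 = (k - r + 1) - 1 by omega),
    Sgen_succ n k Lhat hL (k - r + 1) r (by omega) (by omega) A x]
  rw [pd_index_congr n k Lhat A (by omega) (by omega)
    (show k - r + 1 - 1 = k - r by omega)]
  have h6 : w.2.2 ⟨k - (r+1), by omega⟩ A = w.2.2 ⟨k - r - 1, by omega⟩ A := rfl
  rw [h6, ← hSdef]
  ring
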